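/- Let d ≥ 1 and let Λ be an (internally) ℕ-graded ring with 𝒜ₙ = 0 for n > d, such that 𝒜₀ is a semisimple ring and the socle of Λ as a right Λ-module equals 𝒜_d (every simple right Λ-submodule of Λ is contained in 𝒜_d, and 𝒜_d is a sum of simple right Λ-submodules). Let M be a graded right Λ-module with Mₙ = 0 for all n outside {0, 1, …, d−1}, generated in degree 0, and let p : P → M be a surjective degree-preserving Λ-linear map from a graded projective right Λ-module P generated in degree 0, restricting to a bijection P₀ → M₀. Then K = ker p is a graded submodule of P concentrated in degrees 1 through d (Kₙ = 0 unless 1 ≤ n ≤ d), and the socle of K equals its degree-d component K ∩ P_d (every simple Λ-submodule of K is contained in K ∩ P_d, and K ∩ P_d is a sum of simple Λ-submodules). -/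
import Mathlib


open MulOpposite DirectSum

lemma aux_map_simple {R A B : Type*} [Ring R] [AddCommGroup A] [AddCommGroup B]
    [Module R A] [Module R B] (f : A →ₗ[R] B) (S : Submodule R A) (hS : IsSimpleModule R S) :
    Submodule.map f S = ⊥ ∨ IsSimpleModule R (Submodule.map f S) := by
  classical
  set g := f.comp S.subtype with hg
  have hrange : LinearMap.range g = Submodule.map f S := by
    rw [hg, LinearMap.range_comp, Submodule.range_subtype]
  haveI := hS
  rcases eq_bot_or_eq_top (LinearMap.ker g) with hk | hk
  · right
    have hinj : Function.Injective g := by rwa [← LinearMap.ker_eq_bot]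
    rw [← hrange]
    exact IsSimpleModule.congr (LinearEquiv.ofInjective g hinj).symm
  · left
    rw [← hrange, LinearMap.range_eq_bot]
    exact LinearMap.ker_eq_top.mp hk

lemma aux_decompose_sum {M : Type*} [AddCommGroup M] (ℳ : ℤ → AddSubgroup M)
    [DirectSum.Decomposition ℳ] (s : Finset ℤ) (f : ℤ → M) (hf : ∀ n ∈ s, f n ∈ ℳ n) (k : ℤ) :
    ((DirectSum.decompose ℳ (∑ n ∈ s, f n) k : ℳ k) : M) = if k ∈ s then f k else 0 := by
  classical
  induction s using Finset.cons_induction with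
  | empty => simp
  | cons a t hat ih =>
    rw [Finset.sum_cons, DirectSum.decompose_add, DirectSum.add_apply, AddSubgroup.coe_add]
    have h1 : ((DirectSum.decompose ℳ (f a) k : ℳ k) : M) = if k = a then f a else 0 := by
      by_cases h : k = a
      · subst h
        rw [if_pos rfl]
        exact DirectSum.decompose_of_mem_same ℳ (hf k (Finset.mem_cons_self k t))
      · rw [if_neg h]
        exact DirectSum.decompose_of_mem_ne ℳ (hf a (Finset.mem_cons_self a t))
          (fun h' => h h'.symm)
    have h2 := ih (fun n hn => hf n (Finset.mem_cons_of_mem hn))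
    rw [h1, h2]
    by_cases hka : k = a
    · subst hka
      rw [if_pos rfl, if_neg hat, if_pos (Finset.mem_cons_self k t), add_zero]
    · rw [if_neg hka]
      by_cases hkt : k ∈ t
      · rw [if_pos hkt, if_pos (Finset.mem_cons.mpr (Or.inr hkt)), zero_add]
      · rw [if_neg hkt, if_neg (by simp [Finset.mem_cons, hka, hkt]), zero_add]

def opSmulMap {Λ : Type*} [Ring Λ] {P : Type*} [AddCommGroup P] [Module Λᵐᵒᵖ P] (m : P) :
    Λ →ₗ[Λᵐᵒᵖ] P where
  toFun a := MulOpposite.op a • m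
  map_add' a b := by show op (a + b) • m = op a • m + op b • m; rw [MulOpposite.op_add, add_smul]
  map_smul' r a := by
    simp only [RingHom.id_apply]
    show op (r • a) • m = r • (op a • m)
    rw [MulOpposite.smul_eq_mul_unop, MulOpposite.op_mul, MulOpposite.op_unop, mul_smul]

lemma aux_map_simple_inj {R A B : Type*} [Ring R] [AddCommGroup A] [AddCommGroup B]
    [Module R A] [Module R B] (f : A →ₗ[R] B) (hf : Function.Injective f)
    (S : Submodule R A) (hS : IsSimpleModule R S) :
    IsSimpleModule R (Submodule.map f S) := by
  haveI := hS
  exact IsSimpleModule.congr (Submodule.equivMapOfInjective f hf S).symm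

@[simp] lemma opSmulMap_apply {Λ : Type*} [Ring Λ] {P : Type*} [AddCommGroup P]
    [Module Λᵐᵒᵖ P] (m : P) (a : Λ) : opSmulMap m a = MulOpposite.op a • m := rfl



/-- Let `d ≥ 1` and let `Λ` be an internally ℕ-graded ring with `𝒜 n = 0` for `n > d`,
`𝒜 0` semisimple, and socle of `Λ` as a right `Λ`-module equal to `𝒜 d`.  Let `M` be a
graded right `Λ`-module concentrated in degrees `0,…,d-1` and generated in degree 0, and
let `p : P → M` be a surjective degree-preserving map from a graded projective module
generated in degree 0 restricting to a bijection in degree 0.  Then `K = ker p` is a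
graded submodule of `P` concentrated in degrees 1 through `d`, and the socle of `K`
equals its degree-`d` component `K ∩ P_d`. -/
theorem stmt_12 {Λ : Type*} [Ring Λ] (d : ℕ) (hd : 1 ≤ d)
    (𝒜 : ℤ → AddSubgroup Λ) [GradedRing 𝒜]
    (hconc : ∀ n : ℤ, n < 0 ∨ (d : ℤ) < n → 𝒜 n = ⊥)
    (hss : IsSemisimpleRing (𝒜 0))
    (hsoc : ((sSup {S : Submodule Λᵐᵒᵖ Λ | IsSimpleModule Λᵐᵒᵖ S} :
        Submodule Λᵐᵒᵖ Λ) : Set Λ) = (𝒜 (d : ℤ) : Set Λ))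
    {M P : Type*}
    [AddCommGroup M] [Module Λᵐᵒᵖ M] (ℳ : ℤ → AddSubgroup M) [DirectSum.Decomposition ℳ]
    (hM : ∀ (i n : ℤ), ∀ a ∈ 𝒜 i, ∀ m ∈ ℳ n, (MulOpposite.op a) • m ∈ ℳ (n + i))
    (hMconc : ∀ n : ℤ, n < 0 ∨ (d : ℤ) - 1 < n → ℳ n = ⊥)
    (hMgen : Submodule.span Λᵐᵒᵖ (ℳ 0 : Set M) = ⊤)
    [AddCommGroup P] [Module Λᵐᵒᵖ P] (𝒬 : ℤ → AddSubgroup P) [DirectSum.Decomposition 𝒬]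
    (hP : ∀ (i n : ℤ), ∀ a ∈ 𝒜 i, ∀ m ∈ 𝒬 n, (MulOpposite.op a) • m ∈ 𝒬 (n + i))
    (hPproj : Module.Projective Λᵐᵒᵖ P)
    (hPgen : Submodule.span Λᵐᵒᵖ (𝒬 0 : Set P) = ⊤)
    (p : P →ₗ[Λᵐᵒᵖ] M) (hpsurj : Function.Surjective p)
    (hpdeg : ∀ n : ℤ, ∀ x ∈ 𝒬 n, p x ∈ ℳ n)
    (hp0 : Set.BijOn p (𝒬 0 : Set P) (ℳ 0 : Set M)) :
    (∀ x ∈ LinearMap.ker p, ∀ n : ℤ,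
        ((DirectSum.decompose 𝒬 x n : 𝒬 n) : P) ∈ LinearMap.ker p) ∧
    (∀ n : ℤ, n < 1 ∨ (d : ℤ) < n → ∀ x ∈ LinearMap.ker p, x ∈ 𝒬 n → x = 0) ∧
    ((sSup {S : Submodule Λᵐᵒᵖ P | IsSimpleModule Λᵐᵒᵖ S ∧ S ≤ LinearMap.ker p} :
        Submodule Λᵐᵒᵖ P) : Set P) =
      (LinearMap.ker p : Set P) ∩ (𝒬 (d : ℤ) : Set P) := by
  classical
  haveI := hPproj
  -- expanding an op-scalar action into homogeneous pieces
  have hsmulP : ∀ (a : Λ) (x : P), (op a) • x =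
      ∑ i ∈ (DirectSum.decompose 𝒜 a).support,
        (op ((DirectSum.decompose 𝒜 a i : 𝒜 i) : Λ)) • x := by
    intro a x
    conv_lhs => rw [← DirectSum.sum_support_decompose 𝒜 a]
    have hop : (op (∑ i ∈ (DirectSum.decompose 𝒜 a).support,
        ((DirectSum.decompose 𝒜 a i : 𝒜 i) : Λ))) =
        ∑ i ∈ (DirectSum.decompose 𝒜 a).support,
          op ((DirectSum.decompose 𝒜 a i : 𝒜 i) : Λ) :=
      map_sum (opAddEquiv : Λ ≃+ Λᵐᵒᵖ) _ _
    rw [hop, Finset.sum_smul]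
  -- P is concentrated in degrees 0..d
  have hQconc : ∀ n : ℤ, (n < 0 ∨ (d : ℤ) < n) → ∀ x ∈ 𝒬 n, x = 0 := by
    intro n hn x hx
    set V : AddSubgroup P := ⨆ i : Finset.Icc (0 : ℤ) (d : ℤ), 𝒬 i with hV
    have hmemV : ∀ (i : ℤ) (y : P), y ∈ 𝒬 i → 0 ≤ i → i ≤ (d : ℤ) → y ∈ V := by
      intro i y hy h0 h1
      exact (le_iSup (fun j : Finset.Icc (0:ℤ) (d:ℤ) => 𝒬 j)
        ⟨i, Finset.mem_Icc.mpr ⟨h0, h1⟩⟩) hy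
    have hspanV : ∀ y ∈ Submodule.span Λᵐᵒᵖ (𝒬 0 : Set P), ∀ a : Λ, (op a) • y ∈ V := by
      intro y hy
      induction hy using Submodule.span_induction with
      | mem z hz =>
        intro a
        rw [hsmulP]
        refine AddSubgroup.sum_mem V ?_
        intro i _
        have h1 : ((DirectSum.decompose 𝒜 a i : 𝒜 i) : Λ) ∈ 𝒜 i := SetLike.coe_mem _
        have h2 := hP i 0 _ h1 z hz
        rw [zero_add] at h2
        by_cases hcase : 0 ≤ i ∧ i ≤ (d : ℤ)
        · exact hmemV i _ h2 hcase.1 hcase.2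
        · have hbot : 𝒜 i = ⊥ := hconc i (by omega)
          have hzero : ∀ b : Λ, b ∈ 𝒜 i → b = 0 := fun b hb => by
            rw [hbot] at hb; exact AddSubgroup.mem_bot.mp hb
          have h3 : ((DirectSum.decompose 𝒜 a i : 𝒜 i) : Λ) = 0 := hzero _ h1
          rw [h3, MulOpposite.op_zero, zero_smul]
          exact V.zero_mem
      | zero => intro a; rw [smul_zero]; exact V.zero_mem
      | add u v _ _ hu hv => intro a; rw [smul_add]; exact V.add_mem (hu a) (hv a)
      | smul r u _ hu =>
        intro a
        have h : (op a) • r • u = (op (r.unop * a)) • u := by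
          rw [MulOpposite.op_mul, MulOpposite.op_unop, mul_smul]
        rw [h]
        exact hu (r.unop * a)
    have hxV : x ∈ V := by
      have hx' : x ∈ Submodule.span Λᵐᵒᵖ (𝒬 0 : Set P) := by rw [hPgen]; trivial
      have := hspanV x hx' 1
      rwa [MulOpposite.op_one, one_smul] at this
    have hVcomp : ∀ y ∈ V, ((DirectSum.decompose 𝒬 y n : 𝒬 n) : P) = 0 := by
      intro y hy
      refine AddSubgroup.iSup_induction (C := fun y => ((DirectSum.decompose 𝒬 y n : 𝒬 n) : P) = 0)
        (fun j : Finset.Icc (0:ℤ) (d:ℤ) => 𝒬 j) hy ?_ ?_ ?_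
      · rintro ⟨i, hi⟩ z hz
        have hi' := Finset.mem_Icc.mp hi
        have hne : i ≠ n := by rcases hn with h | h <;> omega
        exact DirectSum.decompose_of_mem_ne 𝒬 (show z ∈ 𝒬 i from hz) hne
      · simp
      · intro u v hu hv
        rw [DirectSum.decompose_add, DirectSum.add_apply, AddSubgroup.coe_add, hu, hv, add_zero]
    have := hVcomp x hxV
    rwa [DirectSum.decompose_of_mem_same 𝒬 hx] at this
  -- Part 1 : the kernel is a graded submodule
  have part1 : ∀ x ∈ LinearMap.ker p, ∀ n : ℤ,
      ((DirectSum.decompose 𝒬 x n : 𝒬 n) : P) ∈ LinearMap.ker p := by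
    intro x hx n
    rw [LinearMap.mem_ker]
    by_cases hn : n ∈ (DirectSum.decompose 𝒬 x).support
    · have hx0 : p x = 0 := hx
      have hsum : x = ∑ m ∈ (DirectSum.decompose 𝒬 x).support,
          ((DirectSum.decompose 𝒬 x m : 𝒬 m) : P) :=
        (DirectSum.sum_support_decompose 𝒬 x).symm
      have hmem : ∀ m ∈ (DirectSum.decompose 𝒬 x).support,
          p ((DirectSum.decompose 𝒬 x m : 𝒬 m) : P) ∈ ℳ m :=
        fun m _ => hpdeg m _ (SetLike.coe_mem _)
      have key := aux_decompose_sum ℳ (DirectSum.decompose 𝒬 x).support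
        (fun m => p ((DirectSum.decompose 𝒬 x m : 𝒬 m) : P)) hmem n
      rw [← map_sum, ← hsum, hx0, if_pos hn] at key
      rw [← key]
      simp
    · have h0 : (DirectSum.decompose 𝒬 x n : 𝒬 n) = 0 := DFinsupp.notMem_support_iff.mp hn
      rw [h0]
      simp
  -- Part 2 : the kernel is concentrated in degrees 1..d
  have part2 : ∀ n : ℤ, n < 1 ∨ (d : ℤ) < n → ∀ x ∈ LinearMap.ker p, x ∈ 𝒬 n → x = 0 := by
    intro n hn x hxk hxn
    rcases hn with hn | hn
    · rcases lt_or_ge n 0 with h | h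
      · exact hQconc n (Or.inl h) x hxn
      · have hn0 : n = 0 := by omega
        subst hn0
        have h1 : p x = p 0 := by rw [map_zero]; exact hxk
        exact hp0.injOn hxn (𝒬 0).zero_mem h1
    · exact hQconc n (Or.inr hn) x hxn
  -- the degree-d part of P, as a submodule
  have hQdsmul : ∀ (r : Λᵐᵒᵖ) (x : P), x ∈ 𝒬 (d : ℤ) → r • x ∈ 𝒬 (d : ℤ) := by
    intro r x hx
    have hru : r • x = op r.unop • x := by rw [MulOpposite.op_unop]
    rw [hru, hsmulP]
    refine AddSubgroup.sum_mem _ ?_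
    intro i _
    have h1 : ((DirectSum.decompose 𝒜 r.unop i : 𝒜 i) : Λ) ∈ 𝒜 i := SetLike.coe_mem _
    have h2 := hP i (d : ℤ) _ h1 x hx
    rcases lt_trichotomy i 0 with h | h | h
    · have hbot : 𝒜 i = ⊥ := hconc i (Or.inl h)
      have hzero : ∀ b : Λ, b ∈ 𝒜 i → b = 0 := fun b hb => by
        rw [hbot] at hb; exact AddSubgroup.mem_bot.mp hb
      have h3 : ((DirectSum.decompose 𝒜 r.unop i : 𝒜 i) : Λ) = 0 := hzero _ h1
      rw [h3, MulOpposite.op_zero, zero_smul]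
      exact (𝒬 _).zero_mem
    · subst h
      rwa [add_zero] at h2
    · have h3 := hQconc ((d : ℤ) + i) (Or.inr (by omega)) _ h2
      rw [h3]
      exact (𝒬 _).zero_mem
  set Qd : Submodule Λᵐᵒᵖ P :=
    { carrier := (𝒬 (d : ℤ) : Set P)
      add_mem' := fun hu hv => (𝒬 _).add_mem hu hv
      zero_mem' := (𝒬 _).zero_mem
      smul_mem' := hQdsmul } with hQdDef
  -- the socle of Λ
  set Ad : Submodule Λᵐᵒᵖ Λ := sSup {S : Submodule Λᵐᵒᵖ Λ | IsSimpleModule Λᵐᵒᵖ S} with hAdDef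
  have hAdmem : ∀ a : Λ, a ∈ Ad ↔ a ∈ 𝒜 (d : ℤ) := fun a => Set.ext_iff.mp hsoc a
  -- free module over the degree-0 part and projective splitting
  set π : ((𝒬 (0:ℤ)) →₀ Λ) →ₗ[Λᵐᵒᵖ] P :=
    Finsupp.lsum ℕ (fun i : (𝒬 (0:ℤ)) => opSmulMap (i : P)) with hπDef
  have hπ_surj : Function.Surjective π := by
    rw [← LinearMap.range_eq_top, ← top_le_iff, ← hPgen, Submodule.span_le]
    intro y hy
    refine ⟨Finsupp.single ⟨y, hy⟩ 1, ?_⟩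
    rw [hπDef, Finsupp.lsum_single, opSmulMap_apply, MulOpposite.op_one, one_smul]
  obtain ⟨s, hs⟩ := Module.projective_lifting_property π LinearMap.id hπ_surj
  -- every simple submodule of P lies in degree d
  have hsimple_le : ∀ S : Submodule Λᵐᵒᵖ P, IsSimpleModule Λᵐᵒᵖ S →
      ∀ x ∈ S, x ∈ 𝒬 (d : ℤ) := by
    intro S hS x hx
    have hcoord : ∀ i : (𝒬 (0:ℤ)), (s x) i ∈ 𝒜 (d : ℤ) := by
      intro i
      set g : P →ₗ[Λᵐᵒᵖ] Λ := (Finsupp.lapply i).comp s with hgDef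
      have hmap := aux_map_simple g S hS
      have hxm : (s x) i ∈ Submodule.map g S := ⟨x, hx, rfl⟩
      have hAdle : Submodule.map g S ≤ Ad := by
        rcases hmap with h | h
        · rw [h]; exact bot_le
        · exact le_sSup h
      exact (hAdmem _).mp (hAdle hxm)
    have hx' : π (s x) = x := by
      rw [← LinearMap.comp_apply, hs]
      rfl
    rw [← hx', hπDef]
    rw [Finsupp.lsum_apply, Finsupp.sum]
    refine AddSubgroup.sum_mem _ ?_
    intro i _
    rw [opSmulMap_apply]
    have := hP (d : ℤ) 0 _ (hcoord i) (i : P) i.2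
    rwa [zero_add] at this
  -- Qd is the sum of the images of the socle of Λ
  have hQd_eq : Qd = ⨆ m : (𝒬 (0:ℤ)), Submodule.map (opSmulMap (m : P)) Ad := by
    apply le_antisymm
    · intro x hx
      have hxQ : x ∈ 𝒬 (d : ℤ) := hx
      set U : Submodule Λᵐᵒᵖ P := ⨆ m : (𝒬 (0:ℤ)), Submodule.map (opSmulMap (m : P)) Ad
        with hUDef
      have hspanU : ∀ y ∈ Submodule.span Λᵐᵒᵖ (𝒬 0 : Set P), ∀ a : Λ,
          ((DirectSum.decompose 𝒬 ((op a) • y) (d : ℤ) : 𝒬 (d : ℤ)) : P) ∈ U := by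
        intro y hy
        induction hy using Submodule.span_induction with
        | mem z hz =>
          intro a
          rw [hsmulP]
          have hmem : ∀ i ∈ (DirectSum.decompose 𝒜 a).support,
              (op ((DirectSum.decompose 𝒜 a i : 𝒜 i) : Λ)) • z ∈ 𝒬 i := by
            intro i _
            have := hP i 0 ((DirectSum.decompose 𝒜 a i : 𝒜 i) : Λ) (SetLike.coe_mem _) z hz
            rwa [zero_add] at this
          rw [aux_decompose_sum 𝒬 _ _ hmem (d : ℤ)]
          split_ifs with h
          · have had : ((DirectSum.decompose 𝒜 a (d:ℤ) : 𝒜 (d:ℤ)) : Λ) ∈ Ad :=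
              (hAdmem _).mpr (SetLike.coe_mem _)
            refine (le_iSup (fun m : (𝒬 (0:ℤ)) => Submodule.map (opSmulMap (m : P)) Ad)
              (⟨z, hz⟩ : (𝒬 (0:ℤ)))) ?_
            exact ⟨_, had, rfl⟩
          · exact U.zero_mem
        | zero =>
          intro a
          rw [smul_zero]
          simp
        | add u v _ _ hu hv =>
          intro a
          rw [smul_add, DirectSum.decompose_add, DirectSum.add_apply, AddSubgroup.coe_add]
          exact U.add_mem (hu a) (hv a)
        | smul r u _ hu =>
          intro a
          have h : (op a) • r • u = (op (r.unop * a)) • u := by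
            rw [MulOpposite.op_mul, MulOpposite.op_unop, mul_smul]
          rw [h]
          exact hu (r.unop * a)
      have hx'' : x ∈ Submodule.span Λᵐᵒᵖ (𝒬 0 : Set P) := by rw [hPgen]; trivial
      have := hspanU x hx'' 1
      rwa [MulOpposite.op_one, one_smul, DirectSum.decompose_of_mem_same 𝒬 hxQ] at this
    · refine iSup_le fun m => ?_
      rintro y ⟨a, ha, rfl⟩
      have ha' : a ∈ 𝒜 (d : ℤ) := (hAdmem a).mp ha
      show (opSmulMap (m : P)) a ∈ 𝒬 (d : ℤ)
      rw [opSmulMap_apply]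
      have := hP (d : ℤ) 0 a ha' (m : P) m.2
      rwa [zero_add] at this
  -- Ad is a semisimple module
  have hAd_semi : IsSemisimpleModule Λᵐᵒᵖ Ad := by
    rw [hAdDef, show (sSup {S : Submodule Λᵐᵒᵖ Λ | IsSimpleModule Λᵐᵒᵖ S}) =
      ⨆ S ∈ {S : Submodule Λᵐᵒᵖ Λ | IsSimpleModule Λᵐᵒᵖ S}, S from sSup_eq_iSup]
    exact isSemisimpleModule_biSup_of_isSemisimpleModule_submodule (fun T hT => by
      haveI : IsSimpleModule Λᵐᵒᵖ T := hT
      infer_instance)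
  -- hence Qd is a semisimple module
  have hQd_semi : IsSemisimpleModule Λᵐᵒᵖ Qd := by
    rw [show Qd = ⨆ m ∈ (Set.univ : Set (𝒬 (0:ℤ))), Submodule.map (opSmulMap (m : P)) Ad by
      rw [hQd_eq, iSup_univ]]
    refine isSemisimpleModule_biSup_of_isSemisimpleModule_submodule (fun m _ => ?_)
    have hrg : Submodule.map (opSmulMap (m : P)) Ad =
        LinearMap.range ((opSmulMap (m : P)).comp Ad.subtype) := by
      rw [LinearMap.range_comp, Submodule.range_subtype]
    rw [hrg]
    haveI := hAd_semi
    exact IsSemisimpleModule.range _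
  refine ⟨part1, part2, ?_⟩
  apply Set.Subset.antisymm
  · -- ⊆
    have h1 : sSup {S : Submodule Λᵐᵒᵖ P | IsSimpleModule Λᵐᵒᵖ S ∧ S ≤ LinearMap.ker p} ≤
        LinearMap.ker p ⊓ Qd := by
      apply sSup_le
      rintro S ⟨hS1, hS2⟩
      exact le_inf hS2 (fun x hx => hsimple_le S hS1 x hx)
    intro x hx
    have := h1 hx
    exact ⟨(Submodule.mem_inf.mp this).1, (Submodule.mem_inf.mp this).2⟩
  · -- ⊇
    rintro x ⟨hxk, hxd⟩
    set Kc : Submodule Λᵐᵒᵖ Qd := Submodule.comap Qd.subtype (LinearMap.ker p) with hKcDef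
    haveI := hQd_semi
    have hKc := IsSemisimpleModule.sSup_simples_le Kc
    have hxq : (⟨x, hxd⟩ : Qd) ∈ Kc := by
      show Qd.subtype ⟨x, hxd⟩ ∈ LinearMap.ker p
      exact hxk
    rw [← hKc] at hxq
    have hmap : Submodule.map Qd.subtype
        (sSup {m : Submodule Λᵐᵒᵖ Qd | IsSimpleModule Λᵐᵒᵖ m ∧ m ≤ Kc}) ≤
        sSup {S : Submodule Λᵐᵒᵖ P | IsSimpleModule Λᵐᵒᵖ S ∧ S ≤ LinearMap.ker p} := by
      rw [sSup_eq_iSup', Submodule.map_iSup]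
      refine iSup_le fun T => ?_
      obtain ⟨T, hT1, hT2⟩ := T
      apply le_sSup
      constructor
      · exact aux_map_simple_inj Qd.subtype Qd.injective_subtype T hT1
      · refine le_trans (Submodule.map_mono hT2) ?_
        rw [hKcDef, Submodule.map_comap_subtype]
        exact inf_le_right
    exact hmap ⟨⟨x, hxd⟩, hxq, rfl⟩
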